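/- arXiv:math/0501271 — 2 statements merged into one kernel-verified Lean document; each statement's English description precedes it below -/
import Mathlib

section
/- (Additive Carlitz implication in Theorem 1.2.) If an arithmetical function f : ℤ⁺ → ℂ satisfies f(n)·τ(n) = 2·(f *_D ζ)(n) for all n ∈ ℤ⁺, then f is completely additive, i.e. f(mn) = f(m) + f(n) for all m, n ∈ ℤ⁺. -/
/-- The Dirichlet convolution of two arithmetical functions
`(f *_D g)(n) = ∑_{d ∣ n} f(d) g(n/d)`. -/
noncomputable def dirichletConv (f g : ℕ → ℂ) : ℕ → ℂ :=
  fun n => ∑ d ∈ n.divisors, f d * g (n / d)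

/-- The arithmetical function `ζ`, with `ζ(n) = 1` for all `n ∈ ℤ⁺`. -/
def zetaFn : ℕ → ℂ := fun _ => 1

/-- `τ = ζ *_D ζ`, the number-of-divisors function. -/
noncomputable def tauFn : ℕ → ℂ := dirichletConv zetaFn zetaFn

/-- The completely additive function determined by the values of `f` at primes. -/
noncomputable def Lfun (f : ℕ → ℂ) (n : ℕ) : ℂ :=
  n.factorization.sum fun p k => (k : ℂ) * f p

lemma Lfun_one (f : ℕ → ℂ) : Lfun f 1 = 0 := by
  simp [Lfun]

lemma Lfun_mul (f : ℕ → ℂ) {m n : ℕ} (hm : m ≠ 0) (hn : n ≠ 0) :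
    Lfun f (m * n) = Lfun f m + Lfun f n := by
  unfold Lfun
  rw [Nat.factorization_mul hm hn, Finsupp.sum_add_index']
  · intro p; simp
  · intro p k1 k2; push_cast; ring

lemma Lfun_prime (f : ℕ → ℂ) {p : ℕ} (hp : p.Prime) : Lfun f p = f p := by
  simp [Lfun, hp.factorization, Finsupp.sum_single_index]

lemma sum_Lfun (f : ℕ → ℂ) {n : ℕ} (hn : n ≠ 0) :
    2 * ∑ d ∈ n.divisors, Lfun f d = (n.divisors.card : ℂ) * Lfun f n := by
  have h1 : ∑ d ∈ n.divisors, Lfun f d = ∑ d ∈ n.divisors, Lfun f (n / d) :=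
    (Nat.sum_div_divisors n (Lfun f)).symm
  have h2 : 2 * ∑ d ∈ n.divisors, Lfun f d
      = ∑ d ∈ n.divisors, (Lfun f d + Lfun f (n / d)) := by
    rw [Finset.sum_add_distrib, ← h1]; ring
  rw [h2, Finset.sum_congr rfl fun d hd => ?_, Finset.sum_const, nsmul_eq_mul]
  obtain ⟨hdvd, -⟩ := Nat.mem_divisors.mp hd
  have hd0 : d ≠ 0 := by rintro rfl; simp [Nat.zero_dvd.mp hdvd] at hn
  have hnd : d * (n / d) = n := Nat.mul_div_cancel' hdvd
  have hnd0 : n / d ≠ 0 := by rintro hh; rw [hh, mul_zero] at hnd; exact hn hnd.symm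
  rw [← Lfun_mul f hd0 hnd0, hnd]

lemma card_ne_two {n : ℕ} (h1 : 1 < n) (hnp : ¬ n.Prime) : n.divisors.card ≠ 2 := by
  obtain ⟨m, hmd, hm2, hmn⟩ := Nat.exists_dvd_of_not_prime2 h1 hnp
  have hn0 : n ≠ 0 := by omega
  have hsub : ({1, m, n} : Finset ℕ) ⊆ n.divisors := by
    intro x hx
    simp only [Finset.mem_insert, Finset.mem_singleton] at hx
    rcases hx with rfl | rfl | rfl <;> simp [Nat.mem_divisors, hmd, hn0]
  have hcard : ({1, m, n} : Finset ℕ).card = 3 := by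
    rw [Finset.card_insert_of_notMem, Finset.card_insert_of_notMem] <;> simp <;> omega
  have := Finset.card_le_card hsub
  omega

lemma tauFn_eq (n : ℕ) : tauFn n = (n.divisors.card : ℂ) := by
  simp [tauFn, dirichletConv, zetaFn]

lemma conv_zeta (f : ℕ → ℂ) (n : ℕ) :
    dirichletConv f zetaFn n = ∑ d ∈ n.divisors, f d := by
  simp [dirichletConv, zetaFn]

lemma f_eq_Lfun (f : ℕ → ℂ)
    (h : ∀ n : ℕ, 0 < n → f n * tauFn n = 2 * dirichletConv f zetaFn n) :
    ∀ n : ℕ, 0 < n → f n = Lfun f n := by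
  intro n
  induction n using Nat.strong_induction_on with
  | _ n ih =>
    intro hn
    by_cases h1 : n = 1
    · subst h1
      have := h 1 one_pos
      rw [tauFn_eq, conv_zeta, Nat.divisors_one] at this
      simp only [Finset.card_singleton, Nat.cast_one, mul_one,
        Finset.sum_singleton] at this
      rw [Lfun_one]
      linear_combination -this
    by_cases hp : n.Prime
    · exact (Lfun_prime f hp).symm
    · -- composite case
      have hn0 : n ≠ 0 := hn.ne'
      have hnmem : n ∈ n.divisors := Nat.mem_divisors_self n hn0
      have key := h n hn
      rw [tauFn_eq, conv_zeta] at key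
      have hsplit : ∑ d ∈ n.divisors, f d
          = f n + ∑ d ∈ n.divisors.erase n, f d := by
        rw [← Finset.add_sum_erase _ f hnmem]
      have hIH : ∑ d ∈ n.divisors.erase n, f d
          = ∑ d ∈ n.divisors.erase n, Lfun f d := by
        refine Finset.sum_congr rfl fun d hd => ?_
        obtain ⟨hdn, hdm⟩ := Finset.mem_erase.mp hd
        obtain ⟨hdvd, -⟩ := Nat.mem_divisors.mp hdm
        have hd0 : 0 < d := Nat.pos_of_dvd_of_pos hdvd hn
        have hdlt : d < n := lt_of_le_of_ne (Nat.le_of_dvd hn hdvd) hdn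
        exact ih d hdlt hd0
      have hLsum : ∑ d ∈ n.divisors.erase n, Lfun f d
          = (∑ d ∈ n.divisors, Lfun f d) - Lfun f n := by
        rw [← Finset.add_sum_erase _ (Lfun f) hnmem]; ring
      have h2L := sum_Lfun f hn0
      have hcard : (n.divisors.card : ℂ) ≠ 2 := by
        have := card_ne_two (by omega : 1 < n) hp
        exact_mod_cast fun hh => this (by exact_mod_cast hh)
      have hfinal : ((n.divisors.card : ℂ) - 2) * (f n - Lfun f n) = 0 := by
        have : f n * (n.divisors.card : ℂ)
            = 2 * (f n + ((∑ d ∈ n.divisors, Lfun f d) - Lfun f n)) := by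
          rw [key, hsplit, hIH, hLsum]
        linear_combination this + h2L
      rcases mul_eq_zero.mp hfinal with hc | hfl
      · exact absurd (by linear_combination hc) hcard
      · linear_combination hfl

/-- Additive Carlitz implication of Theorem 1.2: if `f · τ = 2 (f *_D ζ)`
then `f` is completely additive. -/
theorem stmt_3 (f : ℕ → ℂ)
    (h : ∀ n : ℕ, 0 < n → f n * tauFn n = 2 * dirichletConv f zetaFn n) :
    ∀ m n : ℕ, 0 < m → 0 < n → f (m * n) = f m + f n := by
  intro m n hm hn
  rw [f_eq_Lfun f h m hm, f_eq_Lfun f h n hn,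
    f_eq_Lfun f h (m * n) (Nat.mul_pos hm hn), Lfun_mul f hm.ne' hn.ne']
end

section
/- (Carlitz implication (5) ⟹ (1) of Theorem 2.3.) Let q ≥ 2 be a prime power and let F = Σ_{n≥0} a_n X^n ∈ ℂ[[X]] with a_1 ≠ 0. If Σ_{n≥0} G_n(q)·a_n X^n = F·F, i.e. G_n(q)·a_n = Σ_{k=0}^{n} a_k a_{n−k} for all n ≥ 0, where G_n(q) = Σ_{k=0}^{n} [n]_q!/([k]_q!·[n−k]_q!) are the Galois numbers, then a_n = a_1^n / [n]_q! for all n ≥ 0. -/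
open PowerSeries

/-- The `q`-factorial `[n]_q! = ∏_{i=1}^{n} (1 + q + ⋯ + q^{i-1})`, with `[0]_q! = 1`. -/
def qFactorial (q n : ℕ) : ℕ :=
  ∏ i ∈ Finset.range n, ∑ j ∈ Finset.range (i + 1), q ^ j

/-- The Galois number `Gₙ(q) = ∑_{k=0}^{n} [n]_q!/([k]_q!·[n−k]_q!)` (as a complex number). -/
noncomputable def galoisNumber (q n : ℕ) : ℂ :=
  ∑ k ∈ Finset.range (n + 1),
    (qFactorial q n : ℂ) / ((qFactorial q k : ℂ) * (qFactorial q (n - k) : ℂ))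


lemma qFactorial_pos (q n : ℕ) : 0 < qFactorial q n := by
  apply Finset.prod_pos
  intro i _
  exact lt_of_lt_of_le one_pos (Finset.single_le_sum (f := fun j => q ^ j)
    (fun j _ => Nat.zero_le _) (Finset.mem_range.mpr (Nat.succ_pos i)) |>.trans_eq' (by simp))

lemma qFactorial_ne (q n : ℕ) : (qFactorial q n : ℂ) ≠ 0 := by
  exact_mod_cast Nat.cast_ne_zero.mpr (qFactorial_pos q n).ne'

noncomputable def gReal (q n : ℕ) : ℝ :=
  ∑ k ∈ Finset.range (n + 1),
    (qFactorial q n : ℝ) / ((qFactorial q k : ℝ) * (qFactorial q (n - k) : ℝ))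

lemma galois_eq_real (q n : ℕ) : galoisNumber q n = ((gReal q n : ℝ) : ℂ) := by
  simp [galoisNumber, gReal]

lemma gReal_gt_two (q n : ℕ) (hq2 : 2 ≤ q) (hn : 2 ≤ n) : 2 < gReal q n := by
  have hterm : ∀ k ∈ Finset.range (n+1),
      (0:ℝ) ≤ (qFactorial q n : ℝ) / ((qFactorial q k : ℝ) * (qFactorial q (n - k) : ℝ)) := by
    intro k _
    positivity
  have hsub : ({0, 1} : Finset ℕ) ⊆ Finset.range (n+1) := by
    intro x hx
    simp only [Finset.mem_insert, Finset.mem_singleton] at hx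
    rcases hx with rfl | rfl <;> simp <;> omega
  have hle := Finset.sum_le_sum_of_subset_of_nonneg hsub (fun i hi _ => hterm i hi)
  have h01 : ∑ k ∈ ({0,1} : Finset ℕ),
      (qFactorial q n : ℝ) / ((qFactorial q k : ℝ) * (qFactorial q (n - k) : ℝ))
      = 1 + (qFactorial q n : ℝ) / (qFactorial q (n-1) : ℝ) := by
    rw [Finset.sum_insert (by simp), Finset.sum_singleton]
    have h0 : qFactorial q 0 = 1 := by simp [qFactorial]
    have h1 : qFactorial q 1 = 1 := by simp [qFactorial]
    rw [h0, h1]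
    simp only [Nat.sub_zero, Nat.cast_one, one_mul]
    rw [div_self (Nat.cast_ne_zero.mpr (qFactorial_pos q n).ne')]
  -- qFactorial q n = qFactorial q (n-1) * (∑ j < n, q^j)
  have hfac : qFactorial q n = qFactorial q (n-1) * ∑ j ∈ Finset.range n, q ^ j := by
    have hn1 : n - 1 + 1 = n := by omega
    calc qFactorial q n = qFactorial q (n-1+1) := by rw [hn1]
    _ = qFactorial q (n-1) * ∑ j ∈ Finset.range (n-1+1), q^j := Finset.prod_range_succ _ _
    _ = _ := by rw [hn1]
  have hsum3 : (3:ℕ) ≤ ∑ j ∈ Finset.range n, q ^ j := by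
    calc (3:ℕ) = 1 + 2 := rfl
    _ ≤ q^0 + q^1 := by simp only [pow_zero, pow_one]; omega
    _ ≤ ∑ j ∈ Finset.range n, q ^ j := by
        have : ({0,1} : Finset ℕ) ⊆ Finset.range n := by
          intro x hx; simp only [Finset.mem_insert, Finset.mem_singleton] at hx
          rcases hx with rfl | rfl <;> simp <;> omega
        calc q^0 + q^1 = ∑ j ∈ ({0,1}: Finset ℕ), q ^ j := by
              rw [Finset.sum_insert (by simp), Finset.sum_singleton]
          _ ≤ _ := Finset.sum_le_sum_of_subset this
  have hdiv : (3:ℝ) ≤ (qFactorial q n : ℝ) / (qFactorial q (n-1) : ℝ) := by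
    rw [hfac]
    have hpos : (0:ℝ) < (qFactorial q (n-1) : ℝ) := by exact_mod_cast qFactorial_pos q (n-1)
    push_cast
    rw [mul_comm, mul_div_assoc, div_self hpos.ne', mul_one]
    exact_mod_cast hsum3
  unfold gReal
  calc (2:ℝ) < 1 + 3 := by norm_num
    _ ≤ 1 + (qFactorial q n : ℝ) / (qFactorial q (n-1) : ℝ) := by linarith
    _ = _ := h01.symm
    _ ≤ _ := hle

lemma galois_sub_two_ne (q n : ℕ) (hq2 : 2 ≤ q) (hn : 2 ≤ n) :
    galoisNumber q n - 2 ≠ 0 := by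
  rw [galois_eq_real, sub_ne_zero]
  intro hh
  have := gReal_gt_two q n hq2 hn
  have : (gReal q n : ℂ) = ((2:ℝ) : ℂ) := by rw [hh]; norm_num
  have := Complex.ofReal_injective this
  linarith [gReal_gt_two q n hq2 hn]

/-- Carlitz implication (5) ⟹ (1) of Theorem 2.3: if `∑ Gₙ(q) aₙ Xⁿ = F·F`
then `aₙ = a₁ⁿ/[n]_q!` for all `n`. -/
theorem stmt_12 (q : ℕ) (hq : IsPrimePow q) (hq2 : 2 ≤ q)
    (F : PowerSeries ℂ) (h1 : PowerSeries.coeff 1 F ≠ 0)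
    (h : (PowerSeries.mk fun n => galoisNumber q n * PowerSeries.coeff n F) = F * F) :
    ∀ n : ℕ, PowerSeries.coeff n F
      = (PowerSeries.coeff 1 F) ^ n / (qFactorial q n : ℂ) := by
  have key : ∀ n, galoisNumber q n * PowerSeries.coeff n F
      = ∑ k ∈ Finset.range (n+1),
          PowerSeries.coeff k F * PowerSeries.coeff (n-k) F := by
    intro n
    have hc := congrArg (PowerSeries.coeff n) h
    rw [coeff_mk, coeff_mul, Finset.Nat.sum_antidiagonal_eq_sum_range_succ_mk] at hc
    exact hc
  have hG0 : galoisNumber q 0 = 1 := by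
    simp [galoisNumber, qFactorial]
  have hG1 : galoisNumber q 1 = 2 := by
    simp [galoisNumber, qFactorial, Finset.sum_range_succ]
    norm_num
  have ha0 : PowerSeries.coeff 0 F = 1 := by
    have k1 := key 1
    rw [hG1, Finset.sum_range_succ, Finset.sum_range_one] at k1
    simp only [Nat.sub_zero, Nat.sub_self] at k1
    have hz : (PowerSeries.coeff 0 F - 1) * PowerSeries.coeff 1 F = 0 := by
      linear_combination (-1/2 : ℂ) * k1
    rcases mul_eq_zero.mp hz with hz' | hz'
    · exact sub_eq_zero.mp hz'
    · exact absurd hz' h1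
  intro n
  induction n using Nat.strong_induction_on with
  | _ n IH =>
    match n with
    | 0 => simpa [qFactorial] using ha0
    | 1 => simp [qFactorial]
    | (m+2) =>
      set A := PowerSeries.coeff 1 F with hA
      have hterm : ∀ k ∈ Finset.range (m+1),
          PowerSeries.coeff (k+1) F * PowerSeries.coeff (m+2-(k+1)) F
          = (qFactorial q (m+2) : ℂ) /
              ((qFactorial q (k+1) : ℂ) * (qFactorial q (m+2-(k+1)) : ℂ))
            * (A ^ (m+2) / (qFactorial q (m+2) : ℂ)) := by
        intro k hk
        rw [Finset.mem_range] at hk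
        rw [IH (k+1) (by omega), IH (m+2-(k+1)) (by omega)]
        have hpow : A ^ (k+1) * A ^ (m+2-(k+1)) = A ^ (m+2) := by
          rw [← pow_add]; congr 1; omega
        have hd := qFactorial_ne q (m+2)
        rw [div_mul_div_comm, hpow, div_mul_div_comm,
          mul_comm ((qFactorial q (m+2) : ℂ)), mul_div_mul_right _ _ hd]
      have hGsplit : galoisNumber q (m+2)
          = (∑ k ∈ Finset.range (m+1),
              (qFactorial q (m+2) : ℂ) /
                ((qFactorial q (k+1) : ℂ) * (qFactorial q (m+2-(k+1)) : ℂ))) + 2 := by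
        unfold galoisNumber
        rw [Finset.sum_range_succ, Finset.sum_range_succ']
        have e0 : (qFactorial q (m+2) : ℂ) /
            ((qFactorial q 0 : ℂ) * (qFactorial q (m+2-0) : ℂ)) = 1 := by
          simp only [Nat.sub_zero]
          rw [show qFactorial q 0 = 1 from rfl]
          simp [div_self (qFactorial_ne q (m+2))]
        have en : (qFactorial q (m+2) : ℂ) /
            ((qFactorial q (m+2) : ℂ) * (qFactorial q (m+2-(m+2)) : ℂ)) = 1 := by
          simp only [Nat.sub_self]
          rw [show qFactorial q 0 = 1 from rfl]
          simp [div_self (qFactorial_ne q (m+2))]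
        rw [e0, en]
        ring
      have k2 := key (m+2)
      rw [Finset.sum_range_succ, Finset.sum_range_succ'] at k2
      rw [Finset.sum_congr rfl hterm, ← Finset.sum_mul] at k2
      simp only [Nat.sub_zero, Nat.sub_self, ha0, one_mul, mul_one] at k2
      have hGm : (∑ k ∈ Finset.range (m+1),
              (qFactorial q (m+2) : ℂ) /
                ((qFactorial q (k+1) : ℂ) * (qFactorial q (m+2-(k+1)) : ℂ)))
          = galoisNumber q (m+2) - 2 := by
        rw [hGsplit]; ring
      rw [hGm] at k2
      have hne := galois_sub_two_ne q (m+2) hq2 (by omega)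
      have : (galoisNumber q (m+2) - 2) * PowerSeries.coeff (m+2) F
          = (galoisNumber q (m+2) - 2) * (A ^ (m+2) / (qFactorial q (m+2) : ℂ)) := by
        linear_combination k2
      exact mul_left_cancel₀ hne this
end
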